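/- Let L be a real topological vector space and φ : L → ℝ a convex function. Then φ is continuous on L if and only if φ is upper semicontinuous on L. -/

import Mathlib

theorem convex_continuous_iff_upperSemicontinuous
    {L : Type*} [AddCommGroup L] [Module ℝ L] [TopologicalSpace L]
    [IsTopologicalAddGroup L] [ContinuousSMul ℝ L]
    (φ : L → ℝ) (hφ : ConvexOn ℝ Set.univ φ) :
    Continuous φ ↔ UpperSemicontinuous φ := by
  constructor
  · exact fun h => h.upperSemicontinuous
  · intro husc
    rw [continuous_iff_continuousAt]
    intro x₀
    rw [ContinuousAt, Metric.tendsto_nhds]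
    intro ε hε
    set t : ℝ := min (ε / 2) (1 / 2) with htdef
    have ht0 : 0 < t := lt_min (by linarith) (by norm_num)
    have ht1 : t ≤ 1 / 2 := min_le_right _ _
    have htε : t < ε := lt_of_le_of_lt (min_le_left _ _) (by linarith)
    have htne : t ≠ 0 := ne_of_gt ht0
    have h1t : (0:ℝ) < 1 + t := by linarith
    -- upper bound near x₀ from upper semicontinuity
    have h1 : ∀ᶠ x in nhds x₀, φ x < φ x₀ + 1 := husc x₀ (φ x₀ + 1) (lt_add_one _)
    -- pull back along v ↦ x₀ + v and v ↦ x₀ - v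
    have hc1 : Filter.Tendsto (fun v : L => x₀ + v) (nhds 0) (nhds x₀) := by
      have := (continuous_const.add continuous_id (f := fun v : L => x₀)).tendsto (0:L)
      simpa [Pi.add_def] using this
    have hc2 : Filter.Tendsto (fun v : L => x₀ - v) (nhds 0) (nhds x₀) := by
      have := (continuous_const.sub continuous_id (f := fun v : L => x₀)).tendsto (0:L)
      simpa [Pi.sub_def] using this
    have hV : ∀ᶠ v in nhds (0:L), φ (x₀ + v) < φ x₀ + 1 ∧ φ (x₀ - v) < φ x₀ + 1 :=
      (hc1.eventually h1).and (hc2.eventually h1)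
    -- pull back along x ↦ t⁻¹ • (x - x₀)
    have hg : Filter.Tendsto (fun x : L => t⁻¹ • (x - x₀)) (nhds x₀) (nhds 0) := by
      have : Continuous (fun x : L => t⁻¹ • (x - x₀)) :=
        (continuous_id.sub continuous_const).const_smul _
      have h := this.tendsto x₀
      simpa using h
    filter_upwards [hg.eventually hV] with x hx
    set v : L := t⁻¹ • (x - x₀) with hvdef
    obtain ⟨hup, hdown⟩ := hx
    have hxv : x = x₀ + t • v := by
      rw [hvdef, smul_inv_smul₀ htne]
      abel
    -- upper estimate: φ x ≤ (1-t) φ x₀ + t φ (x₀ + v)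
    have hupper : φ x ≤ (1 - t) * φ x₀ + t * φ (x₀ + v) := by
      have h := hφ.2 (Set.mem_univ x₀) (Set.mem_univ (x₀ + v))
        (by linarith : (0:ℝ) ≤ 1 - t) ht0.le (by ring)
      have heq : (1 - t) • x₀ + t • (x₀ + v) = x := by
        rw [hxv]; module
      rwa [heq] at h
    have hA : φ x < φ x₀ + t := by
      have : t * φ (x₀ + v) < t * (φ x₀ + 1) := by
        exact (mul_lt_mul_iff_right₀ ht0).2 hup
      nlinarith
    -- lower estimate: φ x₀ ≤ (1/(1+t)) φ x + (t/(1+t)) φ (x₀ - v)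
    have hlower : φ x₀ ≤ (1 / (1 + t)) * φ x + (t / (1 + t)) * φ (x₀ - v) := by
      have h := hφ.2 (Set.mem_univ x) (Set.mem_univ (x₀ - v))
        (by positivity : (0:ℝ) ≤ 1 / (1 + t))
        (by positivity : (0:ℝ) ≤ t / (1 + t))
        (by field_simp)
      have heq : (1 / (1 + t)) • x + (t / (1 + t)) • (x₀ - v) = x₀ := by
        rw [hxv]
        match_scalars <;> (field_simp; try ring)
      rwa [heq] at h
    have hB : φ x₀ - t < φ x := by
      have h2 : φ x₀ * (1 + t) ≤ φ x + t * φ (x₀ - v) := by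
        have := mul_le_mul_of_nonneg_left hlower h1t.le
        calc φ x₀ * (1 + t) = (1 + t) * φ x₀ := by ring
          _ ≤ (1 + t) * ((1 / (1 + t)) * φ x + (t / (1 + t)) * φ (x₀ - v)) :=
              (mul_le_mul_iff_right₀ h1t).2 hlower
          _ = φ x + t * φ (x₀ - v) := by field_simp
      nlinarith
    rw [Real.dist_eq, abs_sub_lt_iff]
    constructor <;> linarith
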